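/- Define a sequence of positive integers by t_1 = 1 and t_{n+1} = t_n + ⌈log(t_n + 1)⌉. Let T(k) = {t_n : n ∈ ℕ⁺} ∩ {1,...,k}. Then |T(k)| · (log k)/k → 1 as k → ∞. -/

import Mathlib

open Filter Real

section Basics
variable (t : ℕ → ℕ) (ht1 : t 1 = 1)
  (hrec : ∀ n, 1 ≤ n → t (n + 1) = t n + ⌈Real.log ((t n : ℝ) + 1)⌉₊)
include ht1 hrec

lemma tpos : ∀ n, 1 ≤ n → 1 ≤ t n := by
  intro n hn
  induction n with
  | zero => omega
  | succ m ih =>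
    rcases Nat.eq_or_lt_of_le hn with h | h
    · rw [← h, ht1]
    · have hm : 1 ≤ m := by omega
      have := ih hm
      rw [hrec m hm]; omega

lemma tstep : ∀ n, 1 ≤ n → t n < t (n + 1) := by
  intro n hn
  have h1 := tpos t ht1 hrec n hn
  have hc : 0 < ⌈Real.log ((t n : ℝ) + 1)⌉₊ := by
    rw [Nat.ceil_pos]
    apply Real.log_pos
    have : (1:ℝ) ≤ (t n : ℝ) := by exact_mod_cast h1
    linarith
  rw [hrec n hn]; omega

lemma tmono : ∀ m n, 1 ≤ m → m ≤ n → t m ≤ t n := by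
  intro m n hm hmn
  induction n with
  | zero => omega
  | succ p ih =>
    rcases Nat.eq_or_lt_of_le hmn with h | h
    · rw [h]
    · have hmp : m ≤ p := by omega
      have h1 : 1 ≤ p := by omega
      exact le_trans (ih hmp) (le_of_lt (tstep t ht1 hrec p h1))

lemma tstrict : ∀ m n, 1 ≤ m → m < n → t m < t n := by
  intro m n hm hmn
  have := tmono t ht1 hrec (m+1) n (by omega) hmn
  have := tstep t ht1 hrec m hm
  omega

lemma tge : ∀ n, 1 ≤ n → n ≤ t n := by
  intro n hn
  induction n with
  | zero => omega
  | succ p ih =>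
    rcases Nat.eq_or_lt_of_le hn with h | h
    · rw [← h, ht1]
    · have hp : 1 ≤ p := by omega
      have := ih hp
      have := tstep t ht1 hrec p hp
      omega

lemma tsq : ∀ n, 1 ≤ n → t n ≤ n ^ 2 := by
  intro n hn
  induction n with
  | zero => omega
  | succ p ih =>
    rcases Nat.eq_or_lt_of_le hn with h | h
    · rw [← h, ht1]; norm_num
    · have hp : 1 ≤ p := by omega
      have hih := ih hp
      rw [hrec p hp]
      have hceil : ⌈Real.log ((t p : ℝ) + 1)⌉₊ ≤ 2 * p + 1 := by
        apply Nat.ceil_le.mpr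
        have h1 : (t p : ℝ) + 1 ≤ ((p:ℝ) + 1) ^ 2 := by
          have : (t p : ℝ) ≤ (p:ℝ)^2 := by exact_mod_cast hih
          nlinarith [(by exact_mod_cast hp : (1:ℝ) ≤ (p:ℝ))]
        have h2 : Real.log ((t p : ℝ) + 1) ≤ 2 * Real.log ((p:ℝ) + 1) := by
          calc Real.log ((t p : ℝ) + 1) ≤ Real.log (((p:ℝ) + 1)^2) := by
                apply Real.log_le_log (by positivity) h1
            _ = 2 * Real.log ((p:ℝ)+1) := by
                rw [Real.log_pow]; push_cast; ring
        have h3 : Real.log ((p:ℝ) + 1) ≤ (p:ℝ) := by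
          have := Real.log_le_sub_one_of_pos (x := (p:ℝ)+1) (by positivity)
          linarith
        push_cast
        linarith
      nlinarith

lemma tcrude : ∀ n, 1 ≤ n → (t n : ℝ) ≤ 3 * n * Real.log (n + 1) + 1 := by
  intro n hn
  induction n with
  | zero => omega
  | succ p ih =>
    rcases Nat.eq_or_lt_of_le hn with h | h
    · rw [← h, ht1]
      have : (0:ℝ) ≤ Real.log (1+1) := Real.log_nonneg (by norm_num)
      push_cast
      nlinarith
    · have hp : 1 ≤ p := by omega
      have hih := ih hp
      have hsq := tsq t ht1 hrec p hp
      have hlog2 : Real.log ((t p : ℝ) + 1) ≤ 2 * Real.log ((p:ℝ) + 2) := by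
        calc Real.log ((t p : ℝ) + 1) ≤ Real.log (((p:ℝ)+2)^2) := by
              apply Real.log_le_log (by positivity)
              have : (t p : ℝ) ≤ (p:ℝ)^2 := by exact_mod_cast hsq
              nlinarith [Nat.cast_nonneg (α := ℝ) p]
          _ = 2 * Real.log ((p:ℝ)+2) := by rw [Real.log_pow]; push_cast; ring
      have hone : (1:ℝ) ≤ Real.log ((p:ℝ)+2) := by
        rw [Real.le_log_iff_exp_le (by positivity)]
        have h3 : Real.exp 1 ≤ 3 := by
          have := Real.exp_one_lt_d9
          linarith
        have : (3:ℝ) ≤ (p:ℝ) + 2 := by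
          have : (1:ℝ) ≤ (p:ℝ) := by exact_mod_cast hp
          linarith
        linarith
      have hceil : (⌈Real.log ((t p : ℝ) + 1)⌉₊ : ℝ) ≤ 3 * Real.log ((p:ℝ)+2) := by
        have h1t : (1:ℝ) ≤ (t p : ℝ) + 1 := by
          have : (0:ℝ) ≤ (t p : ℝ) := Nat.cast_nonneg (t p)
          linarith
        have := Nat.ceil_lt_add_one (a := Real.log ((t p : ℝ) + 1))
          (Real.log_nonneg h1t)
        linarith
      have hmono : Real.log ((p:ℝ)+1) ≤ Real.log ((p:ℝ)+2) :=
        Real.log_le_log (by positivity) (by linarith)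
      rw [hrec p hp]
      push_cast
      have : (t p : ℝ) + (⌈Real.log ((t p : ℝ) + 1)⌉₊ : ℝ) ≤
          3 * p * Real.log (p+1) + 1 + 3 * Real.log ((p:ℝ)+2) := by linarith
      calc (t p : ℝ) + (⌈Real.log ((t p : ℝ) + 1)⌉₊ : ℝ)
          ≤ 3 * p * Real.log (p+1) + 1 + 3 * Real.log ((p:ℝ)+2) := this
        _ ≤ 3 * ((p:ℝ)+1) * Real.log ((p:ℝ)+1+1) + 1 := by
            have hp0 : (0:ℝ) ≤ (p:ℝ) := Nat.cast_nonneg p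
            have he : ((p:ℝ)+1+1) = (p:ℝ)+2 := by ring
            rw [he]
            nlinarith [mul_le_mul_of_nonneg_left hmono hp0]

lemma tupper : ∀ n, 1 ≤ n → (t n : ℝ) ≤
    n * Real.log n + n * (Real.log (3 * Real.log (n + 1) + 2) + 1) + 1 := by
  intro n hn
  induction n with
  | zero => omega
  | succ p ih =>
    rcases Nat.eq_or_lt_of_le hn with h | h
    · rw [← h, ht1]
      have h1 : (0:ℝ) ≤ Real.log 1 := by rw [Real.log_one]
      have h2 : (0:ℝ) ≤ Real.log (3 * Real.log (1+1) + 2) := by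
        apply Real.log_nonneg
        have := Real.log_nonneg (by norm_num : (1:ℝ) ≤ 1+1)
        linarith
      push_cast
      rw [Real.log_one]
      linarith
    · have hp : 1 ≤ p := by omega
      have hih := ih hp
      have hcrude := tcrude t ht1 hrec p hp
      have hp1 : (1:ℝ) ≤ (p:ℝ) := by exact_mod_cast hp
      have hlogp1 : (0:ℝ) ≤ Real.log ((p:ℝ)+1) := Real.log_nonneg (by linarith)
      -- increment bound
      have hin : Real.log ((t p : ℝ) + 1) ≤
          Real.log p + Real.log (3 * Real.log ((p:ℝ)+1) + 2) := by
        have h1 : (t p : ℝ) + 1 ≤ (p:ℝ) * (3 * Real.log ((p:ℝ)+1) + 2) := by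
          nlinarith
        calc Real.log ((t p : ℝ) + 1)
            ≤ Real.log ((p:ℝ) * (3 * Real.log ((p:ℝ)+1) + 2)) := by
              apply Real.log_le_log (by positivity) h1
          _ = Real.log p + Real.log (3 * Real.log ((p:ℝ)+1) + 2) := by
              rw [Real.log_mul (by positivity) (by positivity)]
      have hceil : (⌈Real.log ((t p : ℝ) + 1)⌉₊ : ℝ) ≤
          Real.log p + Real.log (3 * Real.log ((p:ℝ)+1) + 2) + 1 := by
        have h1t : (0:ℝ) ≤ Real.log ((t p : ℝ) + 1) := by
          apply Real.log_nonneg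
          have : (0:ℝ) ≤ (t p : ℝ) := Nat.cast_nonneg (t p)
          linarith
        have := Nat.ceil_lt_add_one h1t
        linarith
      rw [hrec p hp]
      push_cast
      have key : (t p : ℝ) + (⌈Real.log ((t p : ℝ) + 1)⌉₊ : ℝ) ≤
          ((p:ℝ)+1) * Real.log p + ((p:ℝ)+1) * (Real.log (3 * Real.log ((p:ℝ)+1) + 2) + 1) + 1 := by
        linarith
      have hmono1 : Real.log (p:ℝ) ≤ Real.log ((p:ℝ)+1) :=
        Real.log_le_log (by linarith) (by linarith)
      have hmono2 : Real.log (3 * Real.log ((p:ℝ)+1) + 2) ≤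
          Real.log (3 * Real.log ((p:ℝ)+1+1) + 2) := by
        apply Real.log_le_log (by positivity)
        have : Real.log ((p:ℝ)+1) ≤ Real.log ((p:ℝ)+1+1) :=
          Real.log_le_log (by linarith) (by linarith)
        linarith
      have hp0 : (0:ℝ) ≤ (p:ℝ) + 1 := by linarith
      calc (t p : ℝ) + (⌈Real.log ((t p : ℝ) + 1)⌉₊ : ℝ)
          ≤ ((p:ℝ)+1) * Real.log p + ((p:ℝ)+1) * (Real.log (3 * Real.log ((p:ℝ)+1) + 2) + 1) + 1 := key
        _ ≤ ((p:ℝ)+1) * Real.log ((p:ℝ)+1) + ((p:ℝ)+1) * (Real.log (3 * Real.log ((p:ℝ)+1+1) + 2) + 1) + 1 := by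
            nlinarith [mul_le_mul_of_nonneg_left hmono1 hp0, mul_le_mul_of_nonneg_left hmono2 hp0]

lemma tlower : ∀ n : ℕ, 1 ≤ n → (n:ℝ) * Real.log n - n + 1 ≤ (t n : ℝ) := by
  intro n hn
  induction n with
  | zero => omega
  | succ p ih =>
    rcases Nat.eq_or_lt_of_le hn with h | h
    · rw [← h, ht1]
      push_cast
      rw [Real.log_one]
      norm_num
    · have hp : 1 ≤ p := by omega
      have hih := ih hp
      have hp1 : (1:ℝ) ≤ (p:ℝ) := by exact_mod_cast hp
      have hge := tge t ht1 hrec p hp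
      have hgeR : (p:ℝ) ≤ (t p : ℝ) := by exact_mod_cast hge
      have hstep : Real.log ((p:ℝ)+1) ≤ Real.log ((t p : ℝ) + 1) :=
        Real.log_le_log (by linarith) (by linarith)
      have hceil : Real.log ((t p : ℝ) + 1) ≤ (⌈Real.log ((t p : ℝ) + 1)⌉₊ : ℝ) :=
        Nat.le_ceil _
      -- key: p * (log(p+1) - log p) ≤ 1
      have hkey : (p:ℝ) * (Real.log ((p:ℝ)+1) - Real.log p) ≤ 1 := by
        have hdiv : Real.log (((p:ℝ)+1)/(p:ℝ)) ≤ ((p:ℝ)+1)/(p:ℝ) - 1 :=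
          Real.log_le_sub_one_of_pos (by positivity)
        rw [Real.log_div (by positivity) (by positivity)] at hdiv
        have h2 : ((p:ℝ)+1)/(p:ℝ) - 1 = 1/(p:ℝ) := by field_simp; ring
        rw [h2] at hdiv
        have hppos : (0:ℝ) < (p:ℝ) := by linarith
        calc (p:ℝ) * (Real.log ((p:ℝ)+1) - Real.log p) ≤ (p:ℝ) * (1/(p:ℝ)) := by
              apply mul_le_mul_of_nonneg_left hdiv (le_of_lt hppos)
          _ = 1 := by field_simp
      rw [hrec p hp]
      push_cast
      nlinarith

end Basics

-- analytic helpers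
lemma h_invlog : Tendsto (fun n : ℕ => (Real.log n)⁻¹) atTop (nhds 0) :=
  (Real.tendsto_log_atTop.comp tendsto_natCast_atTop_atTop).inv_tendsto_atTop

lemma h_nlog : Tendsto (fun n : ℕ => (n:ℝ) * Real.log n) atTop atTop :=
  tendsto_natCast_atTop_atTop.atTop_mul_atTop₀
    (Real.tendsto_log_atTop.comp tendsto_natCast_atTop_atTop)

lemma h_invnlog : Tendsto (fun n : ℕ => ((n:ℝ) * Real.log n)⁻¹) atTop (nhds 0) :=
  h_nlog.inv_tendsto_atTop

lemma h_loglog : Tendsto (fun n : ℕ => Real.log (Real.log n) / Real.log n) atTop (nhds 0) :=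
  ((Real.isLittleO_log_id_atTop.comp_tendsto
    Real.tendsto_log_atTop).tendsto_div_nhds_zero).comp tendsto_natCast_atTop_atTop

lemma h7 : Tendsto (fun n : ℕ => Real.log (7 * Real.log n) / Real.log n) atTop (nhds 0) := by
  have heq : ∀ᶠ n : ℕ in atTop,
      Real.log (7 * Real.log n) / Real.log n
        = Real.log 7 * (Real.log n)⁻¹ + Real.log (Real.log n) / Real.log n := by
    filter_upwards [eventually_ge_atTop 3] with n hn
    have hl : (0:ℝ) < Real.log n := by
      apply Real.log_pos
      have : (3:ℝ) ≤ (n:ℝ) := by exact_mod_cast hn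
      linarith
    rw [Real.log_mul (by norm_num) (ne_of_gt hl)]
    field_simp
  have := (h_invlog.const_mul (Real.log 7)).add h_loglog
  rw [show (Real.log 7 * 0 + 0 : ℝ) = 0 by ring] at this
  exact Tendsto.congr' (heq.mono fun n h => h.symm) this

-- generic: log (a * log (n+c) + b) / log n → 0  for 0 ≤ a ≤ 3, 1 ≤ b ≤ 2, c ≤ 2
lemma h_small (c : ℕ) (a b : ℝ) (hc : c ≤ 2) (ha0 : 0 ≤ a) (ha : a ≤ 3) (hb1 : 1 ≤ b) (hb : b ≤ 2) :
    Tendsto (fun n : ℕ => Real.log (a * Real.log ((n:ℝ) + c) + b) / Real.log n) atTop (nhds 0) := by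
  apply tendsto_of_tendsto_of_tendsto_of_le_of_le' tendsto_const_nhds h7
  · -- 0 ≤ ...
    filter_upwards [eventually_ge_atTop 3] with n hn
    have hn3 : (3:ℝ) ≤ (n:ℝ) := by exact_mod_cast hn
    have hl : (0:ℝ) < Real.log n := Real.log_pos (by linarith)
    apply div_nonneg _ (le_of_lt hl)
    apply Real.log_nonneg
    have : (0:ℝ) ≤ Real.log ((n:ℝ) + c) := Real.log_nonneg (by
      have : (0:ℝ) ≤ (c:ℝ) := Nat.cast_nonneg c
      linarith)
    nlinarith
  · filter_upwards [eventually_ge_atTop 8] with n hn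
    have hn8 : (8:ℝ) ≤ (n:ℝ) := by exact_mod_cast hn
    have hl : (0:ℝ) < Real.log n := Real.log_pos (by linarith)
    have hl2 : (2:ℝ) ≤ Real.log n := by
      rw [show (2:ℝ) = Real.log (Real.exp 2) by rw [Real.log_exp]]
      apply Real.log_le_log (Real.exp_pos 2)
      have h1 : Real.exp 2 = Real.exp 1 ^ 2 := by
        rw [← Real.exp_nat_mul]; norm_num
      have h2 := Real.exp_one_lt_d9
      nlinarith [Real.exp_pos 1]
    have hcc : ((n:ℝ) + c) ≤ (n:ℝ)^2 := by
      have hcR : (c:ℝ) ≤ 2 := by exact_mod_cast hc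
      nlinarith
    have hlognc : Real.log ((n:ℝ) + c) ≤ 2 * Real.log n := by
      calc Real.log ((n:ℝ) + c) ≤ Real.log ((n:ℝ)^2) := Real.log_le_log (by positivity) hcc
        _ = 2 * Real.log n := by rw [Real.log_pow]; norm_num
    have harg : a * Real.log ((n:ℝ) + c) + b ≤ 7 * Real.log n := by
      have h1 : (0:ℝ) ≤ Real.log ((n:ℝ) + c) := Real.log_nonneg (by
        have : (0:ℝ) ≤ (c:ℝ) := Nat.cast_nonneg c
        linarith)
      nlinarith
    have hXpos : (0:ℝ) < a * Real.log ((n:ℝ) + c) + b := by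
      have h1 : (0:ℝ) ≤ Real.log ((n:ℝ) + c) := Real.log_nonneg (by
        have : (0:ℝ) ≤ (c:ℝ) := Nat.cast_nonneg c
        linarith)
      nlinarith
    exact (div_le_div_iff_of_pos_right hl).mpr (Real.log_le_log hXpos harg)

lemma hr1 : Tendsto (fun n : ℕ => ((n:ℝ) + 1) / n) atTop (nhds 1) := by
  have h := ((tendsto_const_nhds : Tendsto (fun _ : ℕ => (1:ℝ)) atTop (nhds 1))).add
    tendsto_natCast_atTop_atTop.inv_tendsto_atTop
  rw [add_zero] at h
  apply Tendsto.congr' _ h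
  filter_upwards [eventually_ge_atTop 1] with n hn
  have hn0 : ((n:ℝ)) ≠ 0 := by positivity
  rw [Pi.inv_apply]
  field_simp

lemma hr2 : Tendsto (fun n : ℕ => Real.log ((n:ℝ) + 1) / Real.log n) atTop (nhds 1) := by
  have hupb : Tendsto (fun n : ℕ => 1 + Real.log 2 * (Real.log n)⁻¹) atTop (nhds 1) := by
    have h := ((tendsto_const_nhds : Tendsto (fun _ : ℕ => (1:ℝ)) atTop (nhds 1))).add
      (h_invlog.const_mul (Real.log 2))
    rw [mul_zero, add_zero] at h
    exact h
  apply tendsto_of_tendsto_of_tendsto_of_le_of_le' tendsto_const_nhds hupb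
  · filter_upwards [eventually_ge_atTop 3] with n hn
    have hn3 : (3:ℝ) ≤ (n:ℝ) := by exact_mod_cast hn
    have hl : (0:ℝ) < Real.log n := Real.log_pos (by linarith)
    rw [le_div_iff₀ hl, one_mul]
    exact Real.log_le_log (by linarith) (by linarith)
  · filter_upwards [eventually_ge_atTop 3] with n hn
    have hn3 : (3:ℝ) ≤ (n:ℝ) := by exact_mod_cast hn
    have hl : (0:ℝ) < Real.log n := Real.log_pos (by linarith)
    rw [div_le_iff₀ hl]
    have : Real.log ((n:ℝ) + 1) ≤ Real.log (2 * n) :=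
      Real.log_le_log (by linarith) (by linarith)
    rw [Real.log_mul (by norm_num) (by linarith)] at this
    have hexp : (1 + Real.log 2 * (Real.log (n:ℝ))⁻¹) * Real.log (n:ℝ)
        = Real.log (n:ℝ) + Real.log 2 := by
      field_simp
    rw [hexp]
    linarith

section Limits
variable (t : ℕ → ℕ) (ht1 : t 1 = 1)
  (hrec : ∀ n, 1 ≤ n → t (n + 1) = t n + ⌈Real.log ((t n : ℝ) + 1)⌉₊)
include ht1 hrec

lemma lim1 : Tendsto (fun n : ℕ => (t n : ℝ) / ((n:ℝ) * Real.log n)) atTop (nhds 1) := by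
  have hlow : Tendsto (fun n : ℕ => 1 - (Real.log n)⁻¹ + ((n:ℝ) * Real.log n)⁻¹)
      atTop (nhds 1) := by
    have h := (((tendsto_const_nhds : Tendsto (fun _ : ℕ => (1:ℝ)) atTop (nhds 1))).sub
      h_invlog).add h_invnlog
    rw [sub_zero, add_zero] at h
    exact h
  have hupp : Tendsto (fun n : ℕ =>
      1 + (Real.log (3 * Real.log ((n:ℝ) + 1) + 2) / Real.log n + (Real.log n)⁻¹
        + ((n:ℝ) * Real.log n)⁻¹)) atTop (nhds 1) := by
    have h := ((tendsto_const_nhds : Tendsto (fun _ : ℕ => (1:ℝ)) atTop (nhds 1))).add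
      (((h_small 1 3 2 (by norm_num) (by norm_num) le_rfl one_le_two le_rfl).add
        h_invlog).add h_invnlog)
    norm_num at h
    convert h using 2 with n
    push_cast
    ring
  apply tendsto_of_tendsto_of_tendsto_of_le_of_le' hlow hupp
  · filter_upwards [eventually_ge_atTop 3] with n hn
    have hn3 : (3:ℝ) ≤ (n:ℝ) := by exact_mod_cast hn
    have hl : (0:ℝ) < Real.log n := Real.log_pos (by linarith)
    have hnl : (0:ℝ) < (n:ℝ) * Real.log n := by positivity
    have hlb := tlower t ht1 hrec n (by omega)
    have heq : (1 - (Real.log n)⁻¹ + ((n:ℝ) * Real.log n)⁻¹) * ((n:ℝ) * Real.log n)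
        = (n:ℝ) * Real.log n - n + 1 := by
      field_simp
    rw [le_div_iff₀ hnl, heq]
    exact hlb
  · filter_upwards [eventually_ge_atTop 3] with n hn
    have hn3 : (3:ℝ) ≤ (n:ℝ) := by exact_mod_cast hn
    have hl : (0:ℝ) < Real.log n := Real.log_pos (by linarith)
    have hnl : (0:ℝ) < (n:ℝ) * Real.log n := by positivity
    have hub := tupper t ht1 hrec n (by omega)
    rw [div_le_iff₀ hnl]
    have heq : (1 + (Real.log (3 * Real.log ((n:ℝ) + 1) + 2) / Real.log n + (Real.log n)⁻¹
        + ((n:ℝ) * Real.log n)⁻¹)) * ((n:ℝ) * Real.log n)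
        = (n:ℝ) * Real.log n + n * (Real.log (3 * Real.log ((n:ℝ) + 1) + 2) + 1) + 1 := by
      field_simp
      ring
    rw [heq]
    exact hub

lemma lim1' : Tendsto (fun n : ℕ => (t (n + 1) : ℝ) / ((n:ℝ) * Real.log n)) atTop (nhds 1) := by
  have h1 : Tendsto (fun n : ℕ => (t (n + 1) : ℝ) / (((n:ℝ)+1) * Real.log ((n:ℝ)+1)))
      atTop (nhds 1) := by
    have := (lim1 t ht1 hrec).comp (tendsto_add_atTop_nat 1)
    apply this.congr
    intro n
    simp only [Function.comp]
    push_cast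
    try ring_nf
  have h2 : Tendsto (fun n : ℕ => (((n:ℝ)+1) * Real.log ((n:ℝ)+1)) / ((n:ℝ) * Real.log n))
      atTop (nhds 1) := by
    have hm := hr1.mul hr2
    rw [mul_one] at hm
    apply hm.congr'
    filter_upwards [eventually_ge_atTop 2] with n hn
    have hn2 : (2:ℝ) ≤ (n:ℝ) := by exact_mod_cast hn
    field_simp
    try ring
  have := h1.mul h2
  rw [mul_one] at this
  apply this.congr'
  filter_upwards [eventually_ge_atTop 3] with n hn
  have hn3 : (3:ℝ) ≤ (n:ℝ) := by exact_mod_cast hn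
  have hl : (0:ℝ) < Real.log ((n:ℝ)+1) := Real.log_pos (by linarith)
  have hne : ((n:ℝ)+1) * Real.log ((n:ℝ)+1) ≠ 0 := by positivity
  field_simp
  try ring

lemma lim2 : Tendsto (fun n : ℕ => Real.log (t (n + 1) : ℝ) / Real.log n) atTop (nhds 1) := by
  have hupp : Tendsto (fun n : ℕ =>
      Real.log ((n:ℝ) + 1) / Real.log n + Real.log (3 * Real.log ((n:ℝ) + 2) + 1) / Real.log n)
      atTop (nhds 1) := by
    have h := hr2.add (h_small 2 3 1 le_rfl (by norm_num) le_rfl le_rfl one_le_two)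
    rw [add_zero] at h
    convert h using 3 with n
    all_goals (push_cast; ring)
  apply tendsto_of_tendsto_of_tendsto_of_le_of_le' tendsto_const_nhds hupp
  · filter_upwards [eventually_ge_atTop 3] with n hn
    have hn3 : (3:ℝ) ≤ (n:ℝ) := by exact_mod_cast hn
    have hl : (0:ℝ) < Real.log n := Real.log_pos (by linarith)
    rw [le_div_iff₀ hl, one_mul]
    apply Real.log_le_log (by linarith)
    have := tge t ht1 hrec (n+1) (by omega)
    have : ((n:ℝ)+1) ≤ (t (n+1) : ℝ) := by exact_mod_cast this
    linarith
  · filter_upwards [eventually_ge_atTop 3] with n hn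
    have hn3 : (3:ℝ) ≤ (n:ℝ) := by exact_mod_cast hn
    have hl : (0:ℝ) < Real.log n := Real.log_pos (by linarith)
    rw [← add_div, div_le_div_iff_of_pos_right hl]
    have hc := tcrude t ht1 hrec (n+1) (by omega)
    have hlog1 : (0:ℝ) ≤ Real.log ((n:ℝ)+2) := Real.log_nonneg (by linarith)
    have harg : (t (n+1) : ℝ) ≤ ((n:ℝ)+1) * (3 * Real.log ((n:ℝ)+2) + 1) := by
      push_cast at hc
      rw [show ((n:ℝ)+1+1) = (n:ℝ)+2 by ring] at hc
      nlinarith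
    have htpos : (0:ℝ) < (t (n+1) : ℝ) := by
      have := tpos t ht1 hrec (n+1) (by omega)
      exact_mod_cast Nat.lt_of_lt_of_le Nat.zero_lt_one this
    calc Real.log (t (n+1) : ℝ) ≤ Real.log (((n:ℝ)+1) * (3 * Real.log ((n:ℝ)+2) + 1)) :=
          Real.log_le_log htpos harg
      _ = Real.log ((n:ℝ)+1) + Real.log (3 * Real.log ((n:ℝ)+2) + 1) := by
          rw [Real.log_mul (by positivity) (by positivity)]

end Limits

def Nk (t : ℕ → ℕ) (k : ℕ) : ℕ := Nat.findGreatest (fun n => t n ≤ k) k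

section Count
variable (t : ℕ → ℕ) (ht1 : t 1 = 1)
  (hrec : ∀ n, 1 ≤ n → t (n + 1) = t n + ⌈Real.log ((t n : ℝ) + 1)⌉₊)
include ht1 hrec

lemma Nk_ge_one : ∀ k, 1 ≤ k → 1 ≤ Nk t k := by
  intro k hk
  exact Nat.le_findGreatest (P := fun n => t n ≤ k) hk (by simpa [ht1] using hk)

lemma tNk_le : ∀ k, 1 ≤ k → t (Nk t k) ≤ k := by
  intro k hk
  exact Nat.findGreatest_spec (P := fun n => t n ≤ k) (m := 1) hk (by simpa [ht1] using hk)

lemma lt_tNk : ∀ k, 1 ≤ k → k < t (Nk t k + 1) := by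
  intro k hk
  by_contra h
  push_neg at h
  have h1 : Nk t k + 1 ≤ t (Nk t k + 1) := tge t ht1 hrec _ (by omega)
  have h2 : Nk t k + 1 ≤ k := by omega
  exact Nat.findGreatest_is_greatest (Nat.lt_succ_self _) h2 h

lemma Nk_tendsto : Tendsto (fun k => Nk t k) atTop atTop := by
  rw [tendsto_atTop_atTop]
  intro b
  refine ⟨t (max 1 b), fun k hk => ?_⟩
  have hb1 : 1 ≤ max 1 b := le_max_left 1 b
  have h1 : max 1 b ≤ t (max 1 b) := tge t ht1 hrec _ hb1
  have h2 : max 1 b ≤ k := le_trans h1 hk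
  have h3 : max 1 b ≤ Nk t k := Nat.le_findGreatest (P := fun n => t n ≤ k) h2 hk
  exact le_trans (le_max_right 1 b) h3

lemma card_eq : ∀ k, 1 ≤ k →
    ({j | ∃ n, 1 ≤ n ∧ t n = j} ∩ Set.Icc 1 k).ncard = Nk t k := by
  intro k hk
  have hset : {j | ∃ n, 1 ≤ n ∧ t n = j} ∩ Set.Icc 1 k = t '' Set.Icc 1 (Nk t k) := by
    ext j
    constructor
    · rintro ⟨⟨n, hn1, rfl⟩, hj1, hjk⟩
      refine ⟨n, ⟨hn1, ?_⟩, rfl⟩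
      have hntn : n ≤ t n := tge t ht1 hrec n hn1
      exact Nat.le_findGreatest (P := fun n => t n ≤ k) (le_trans hntn hjk) hjk
    · rintro ⟨m, ⟨hm1, hm2⟩, rfl⟩
      refine ⟨⟨m, hm1, rfl⟩, ?_, ?_⟩
      · exact tpos t ht1 hrec m hm1
      · exact le_trans (tmono t ht1 hrec m (Nk t k) hm1 hm2) (tNk_le t ht1 hrec k hk)
  rw [hset]
  rw [Set.ncard_image_of_injOn]
  · rw [← Finset.coe_Icc, Set.ncard_coe_finset, Nat.card_Icc]
    omega
  · intro a ha b hb hab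
    by_contra hne
    rcases Nat.lt_or_ge a b with h | h
    · exact absurd hab (Nat.ne_of_lt (tstrict t ht1 hrec a b ha.1 h))
    · have : b < a := by omega
      exact absurd hab.symm (Nat.ne_of_lt (tstrict t ht1 hrec b a hb.1 this))

end Count

theorem stmt3 (t : ℕ → ℕ) (ht1 : t 1 = 1)
    (hrec : ∀ n, 1 ≤ n → t (n + 1) = t n + ⌈Real.log ((t n : ℝ) + 1)⌉₊) :
    Tendsto
      (fun k : ℕ =>
        ((({j | ∃ n, 1 ≤ n ∧ t n = j} ∩ Set.Icc 1 k).ncard : ℝ) * Real.log k) / k)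
      atTop (nhds 1) := by
  have hNt := Nk_tendsto t ht1 hrec
  -- φ, ψ limits
  have hψ : Tendsto (fun m : ℕ => ((m:ℝ) * Real.log m) / (t m : ℝ)) atTop (nhds 1) := by
    have h := (lim1 t ht1 hrec).inv₀ one_ne_zero
    rw [inv_one] at h
    apply h.congr
    intro m
    rw [inv_div]
  have hφ : Tendsto (fun m : ℕ => ((m:ℝ) * Real.log m) / (t (m+1) : ℝ)) atTop (nhds 1) := by
    have h := (lim1' t ht1 hrec).inv₀ one_ne_zero
    rw [inv_one] at h
    apply h.congr
    intro m
    rw [inv_div]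
  have hχ : Tendsto (fun m : ℕ => Real.log (t (m+1) : ℝ) / Real.log m) atTop (nhds 1) :=
    lim2 t ht1 hrec
  -- A limit
  have hA : Tendsto (fun k : ℕ => ((Nk t k : ℝ) * Real.log (Nk t k)) / k) atTop (nhds 1) := by
    apply tendsto_of_tendsto_of_tendsto_of_le_of_le' (hφ.comp hNt) (hψ.comp hNt)
    · filter_upwards [eventually_ge_atTop 1, hNt.eventually_ge_atTop 1] with k hk hNk1
      simp only [Function.comp]
      have hnum : (0:ℝ) ≤ (Nk t k : ℝ) * Real.log (Nk t k) := by
        apply mul_nonneg (Nat.cast_nonneg _)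
        apply Real.log_nonneg
        exact_mod_cast hNk1
      have hkpos : (0:ℝ) < (k:ℝ) := by exact_mod_cast hk
      have hlt : (k:ℝ) < (t (Nk t k + 1) : ℝ) := by
        exact_mod_cast lt_tNk t ht1 hrec k hk
      exact div_le_div_of_nonneg_left hnum hkpos (le_of_lt hlt) |>.trans_eq rfl
    · filter_upwards [eventually_ge_atTop 1, hNt.eventually_ge_atTop 1] with k hk hNk1
      simp only [Function.comp]
      have hnum : (0:ℝ) ≤ (Nk t k : ℝ) * Real.log (Nk t k) := by
        apply mul_nonneg (Nat.cast_nonneg _)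
        apply Real.log_nonneg
        exact_mod_cast hNk1
      have htpos : (0:ℝ) < (t (Nk t k) : ℝ) := by
        have := tpos t ht1 hrec (Nk t k) hNk1
        exact_mod_cast Nat.lt_of_lt_of_le Nat.zero_lt_one this
      have hle : (t (Nk t k) : ℝ) ≤ (k:ℝ) := by
        exact_mod_cast tNk_le t ht1 hrec k hk
      exact div_le_div_of_nonneg_left hnum htpos hle
  -- B limit
  have hB : Tendsto (fun k : ℕ => Real.log k / Real.log (Nk t k)) atTop (nhds 1) := by
    apply tendsto_of_tendsto_of_tendsto_of_le_of_le' tendsto_const_nhds (hχ.comp hNt)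
    · filter_upwards [eventually_ge_atTop 3, hNt.eventually_ge_atTop 3] with k hk hNk3
      have hNk1 : 1 ≤ Nk t k := by omega
      have hN3 : (3:ℝ) ≤ (Nk t k : ℝ) := by exact_mod_cast hNk3
      have hl : (0:ℝ) < Real.log (Nk t k) := Real.log_pos (by linarith)
      rw [le_div_iff₀ hl, one_mul]
      apply Real.log_le_log (by linarith)
      have h1 : Nk t k ≤ t (Nk t k) := tge t ht1 hrec _ hNk1
      have h2 : t (Nk t k) ≤ k := tNk_le t ht1 hrec k (by omega)
      have : Nk t k ≤ k := le_trans h1 h2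
      exact_mod_cast this
    · filter_upwards [eventually_ge_atTop 3, hNt.eventually_ge_atTop 3] with k hk hNk3
      simp only [Function.comp]
      have hN3 : (3:ℝ) ≤ (Nk t k : ℝ) := by exact_mod_cast hNk3
      have hl : (0:ℝ) < Real.log (Nk t k) := Real.log_pos (by linarith)
      apply (div_le_div_iff_of_pos_right hl).mpr
      have hk3 : (3:ℝ) ≤ (k:ℝ) := by exact_mod_cast hk
      apply Real.log_le_log (by linarith)
      have := lt_tNk t ht1 hrec k (by omega)
      have : (k:ℝ) < (t (Nk t k + 1) : ℝ) := by exact_mod_cast this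
      linarith
  -- combine
  have hAB := hA.mul hB
  rw [mul_one] at hAB
  apply hAB.congr'
  filter_upwards [eventually_ge_atTop 3, hNt.eventually_ge_atTop 3] with k hk hNk3
  have hcard := card_eq t ht1 hrec k (by omega)
  rw [hcard]
  have hN3 : (3:ℝ) ≤ (Nk t k : ℝ) := by exact_mod_cast hNk3
  have hl : (0:ℝ) < Real.log (Nk t k) := Real.log_pos (by linarith)
  have hkpos : (0:ℝ) < (k:ℝ) := by
    have : (3:ℝ) ≤ (k:ℝ) := by exact_mod_cast hk
    linarith
  field_simp
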